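/- If N is a normal subgroup of G_{p,q}, then the order of N belongs to {1, p, q, pq, 2pq, pq², 2pq²}. -/

import Mathlib

open Multiplicative

namespace Mizerka

/-- The standing hypotheses: `p` and `q` are odd primes with `q ∣ p - 1`, and `i` is a
natural number with `i ≡ 1 (mod q)` whose multiplicative order modulo `p` equals `q`. -/
structure Hyp (p q i : ℕ) : Prop where
  hp : Nat.Prime p
  hq : Nat.Prime q
  hoddp : Odd p
  hoddq : Odd q
  hdvd : q ∣ p - 1
  hmod : i ≡ 1 [MOD q]
  hord : orderOf (i : ZMod p) = q

namespace Hyp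

variable {p q i : ℕ}

theorem coprime_q (h : Hyp p q i) : Nat.Coprime i q := by
  have h1 : i % q = 1 % q := h.hmod
  unfold Nat.Coprime
  rw [Nat.gcd_comm, Nat.gcd_rec, h1, ← Nat.gcd_rec, Nat.gcd_one_right]

theorem coprime_p (h : Hyp p q i) : Nat.Coprime i p := by
  haveI : NeZero p := ⟨h.hp.ne_zero⟩
  have hq1 : q - 1 + 1 = q := Nat.succ_pred_eq_of_pos h.hq.pos
  have hmul : (i : ZMod p) * (i : ZMod p) ^ (q - 1) = 1 := by
    rw [← pow_succ', hq1, ← h.hord, pow_orderOf_eq_one]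
  exact (ZMod.isUnit_iff_coprime i p).mp (IsUnit.of_mul_eq_one _ hmul)

theorem coprime (h : Hyp p q i) : Nat.Coprime i (p * q) :=
  Nat.Coprime.mul_right h.coprime_p h.coprime_q

theorem pow_q_modeq (h : Hyp p q i) : i ^ q ≡ 1 [MOD p * q] := by
  have hpq : p ≠ q := by
    have h1 : 0 < p - 1 := by have := h.hp.two_le; omega
    have := Nat.le_of_dvd h1 h.hdvd
    omega
  have hc : Nat.Coprime p q := (Nat.coprime_primes h.hp h.hq).mpr hpq
  rw [← Nat.modEq_and_modEq_iff_modEq_mul hc]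
  constructor
  · haveI : NeZero p := ⟨h.hp.ne_zero⟩
    have hcast : ((i ^ q : ℕ) : ZMod p) = ((1 : ℕ) : ZMod p) := by
      push_cast
      rw [← h.hord, pow_orderOf_eq_one]
    exact (ZMod.natCast_eq_natCast_iff _ _ _).mp hcast
  · calc i ^ q ≡ 1 ^ q [MOD q] := h.hmod.pow q
      _ = 1 := one_pow q

/-- The unit of `ZMod (p*q)` determined by `i`. -/
def unit (h : Hyp p q i) : (ZMod (p * q))ˣ := ZMod.unitOfCoprime i h.coprime

/-- The unit of `ZMod p` determined by `i`. -/
def unitP (h : Hyp p q i) : (ZMod p)ˣ := ZMod.unitOfCoprime i h.coprime_p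

theorem unit_pow (h : Hyp p q i) : h.unit ^ q = 1 := by
  apply Units.ext
  have h2 : ((i ^ q : ℕ) : ZMod (p * q)) = ((1 : ℕ) : ZMod (p * q)) :=
    (ZMod.natCast_eq_natCast_iff _ _ _).mpr h.pow_q_modeq
  push_cast at h2
  simpa [Hyp.unit] using h2

theorem unitP_pow (h : Hyp p q i) : h.unitP ^ q = 1 := by
  apply Units.ext
  have h2 : (i : ZMod p) ^ q = 1 := by rw [← h.hord]; exact pow_orderOf_eq_one _
  simpa [Hyp.unitP] using h2

end Hyp

/-- Multiplication by a unit, as an automorphism of the (multiplicatively written)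
cyclic group `ZMod n`. -/
def zmodMulAut (n : ℕ) : (ZMod n)ˣ →* MulAut (Multiplicative (ZMod n)) where
  toFun u :=
    { toFun := fun x => ofAdd ((u : ZMod n) * x.toAdd)
      invFun := fun x => ofAdd (((u⁻¹ : (ZMod n)ˣ) : ZMod n) * x.toAdd)
      left_inv := fun x => by simp
      right_inv := fun x => by simp
      map_mul' := fun x y => by simp [mul_add, ← ofAdd_add] }
  map_one' := by ext x; simp
  map_mul' u v := by ext x; simp [mul_assoc]

/-- The function underlying the automorphism of the dihedral group induced by
multiplication by a unit on the rotation part. -/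
def dihedralAutFun (n : ℕ) (u : (ZMod n)ˣ) : DihedralGroup n → DihedralGroup n
  | .r j => .r ((u : ZMod n) * j)
  | .sr j => .sr ((u : ZMod n) * j)

/-- Multiplication of indices by a unit, as an automorphism of the dihedral group:
`a ↦ a^u`, `b ↦ b`. -/
def dihedralAut (n : ℕ) : (ZMod n)ˣ →* MulAut (DihedralGroup n) where
  toFun u :=
    { toFun := dihedralAutFun n u
      invFun := dihedralAutFun n u⁻¹
      left_inv := fun x => by cases x <;> simp [dihedralAutFun]
      right_inv := fun x => by cases x <;> simp [dihedralAutFun]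
      map_mul' := fun x y => by cases x <;> cases y <;> simp [dihedralAutFun, mul_add, mul_sub] }
  map_one' := by ext x; cases x <;> simp [dihedralAutFun]
  map_mul' u v := by ext x; cases x <;> simp [dihedralAutFun, mul_assoc]

/-- The homomorphism `ZMod q →* G` (written multiplicatively) sending `1` to a fixed
element `g` with `g ^ q = 1`. -/
def zmodPow {G : Type*} [Group G] (q : ℕ) [NeZero q] (g : G) (hg : g ^ q = 1) :
    Multiplicative (ZMod q) →* G where
  toFun x := g ^ (toAdd x).val
  map_one' := by
    show g ^ (toAdd (1 : Multiplicative (ZMod q))).val = 1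
    rw [toAdd_one, ZMod.val_zero, pow_zero]
  map_mul' x y := by
    have key : ∀ m : ℕ, g ^ (m % q) = g ^ m := fun m => by
      conv_rhs => rw [← Nat.div_add_mod m q]
      rw [pow_add, pow_mul, hg, one_pow, one_mul]
    show g ^ (toAdd (x * y)).val = g ^ (toAdd x).val * g ^ (toAdd y).val
    rw [toAdd_mul, ZMod.val_add, key, pow_add]

namespace Hyp

variable {p q i : ℕ}

/-- The action of `C_q` on `C_{pq}` sending the generator to multiplication by `i`. -/
def phiN (h : Hyp p q i) : Multiplicative (ZMod q) →* MulAut (Multiplicative (ZMod (p * q))) :=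
  haveI : NeZero q := ⟨h.hq.ne_zero⟩
  zmodPow q (zmodMulAut (p * q) h.unit) (by rw [← map_pow, h.unit_pow, map_one])

/-- The action of `C_q` on `D_{2pq}` sending the generator to `τ` (`τ(a) = a^i`, `τ(b) = b`). -/
def phiG (h : Hyp p q i) : Multiplicative (ZMod q) →* MulAut (DihedralGroup (p * q)) :=
  haveI : NeZero q := ⟨h.hq.ne_zero⟩
  zmodPow q (dihedralAut (p * q) h.unit) (by rw [← map_pow, h.unit_pow, map_one])

/-- The action of `C_q` on `C_p` sending the generator to multiplication by `i`. -/
def phiF (h : Hyp p q i) : Multiplicative (ZMod q) →* MulAut (Multiplicative (ZMod p)) :=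
  haveI : NeZero q := ⟨h.hq.ne_zero⟩
  zmodPow q (zmodMulAut p h.unitP) (by rw [← map_pow, h.unitP_pow, map_one])

end Hyp

/-- The group `N_{pq²} = ⟨a, c ∣ a^{pq} = c^q = 1, c a c⁻¹ = a^i⟩ = C_{pq} ⋊ C_q`. -/
abbrev Npq2 {p q i : ℕ} (h : Hyp p q i) : Type :=
  Multiplicative (ZMod (p * q)) ⋊[h.phiN] Multiplicative (ZMod q)

/-- The group `G_{p,q} = D_{2pq} ⋊_φ C_q`. -/
abbrev Gpq {p q i : ℕ} (h : Hyp p q i) : Type :=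
  DihedralGroup (p * q) ⋊[h.phiG] Multiplicative (ZMod q)

/-- The Frobenius group `F_{p,q} = C_p ⋊ C_q` (the nonabelian group of order `pq`). -/
abbrev Fpq {p q i : ℕ} (h : Hyp p q i) : Type :=
  Multiplicative (ZMod p) ⋊[h.phiF] Multiplicative (ZMod q)

variable {p q i : ℕ}

/-- The generator `a` of `N_{pq²}`. -/
def aN (h : Hyp p q i) : Npq2 h := SemidirectProduct.inl (ofAdd 1)

/-- The generator `c` of `N_{pq²}`. -/
def cN (h : Hyp p q i) : Npq2 h := SemidirectProduct.inr (ofAdd 1)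

/-- The generator `a` of `G_{p,q}`. -/
def aG (h : Hyp p q i) : Gpq h := SemidirectProduct.inl (DihedralGroup.r 1)

/-- The generator `b` of `G_{p,q}`. -/
def bG (h : Hyp p q i) : Gpq h := SemidirectProduct.inl (DihedralGroup.sr 0)

/-- The generator `c` of `G_{p,q}`. -/
def cG (h : Hyp p q i) : Gpq h := SemidirectProduct.inr (ofAdd 1)

/-- The real conjugacy class `(g)^± = (g) ∪ (g⁻¹)`. -/
def realClass {G : Type*} [Group G] (g : G) : Set G := {x | IsConj g x ∨ IsConj g⁻¹ x}

/-- `N` is a normal subgroup whose quotient is an `ℓ`-group (the quotient has `ℓ`-power order,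
i.e. `N` has `ℓ`-power index). -/
def OQuot {G : Type*} [Group G] (ℓ : ℕ) (N : Subgroup G) : Prop :=
  N.Normal ∧ ∃ k : ℕ, N.index = ℓ ^ k

/-- `H` is a large subgroup of `G`: it contains `O^ℓ(G)`, the smallest normal subgroup
with `ℓ`-group quotient, for some prime `ℓ`. -/
def IsLarge {G : Type*} [Group G] (H : Subgroup G) : Prop :=
  ∃ ℓ : ℕ, Nat.Prime ℓ ∧
    ∃ N : Subgroup G, OQuot ℓ N ∧ (∀ M : Subgroup G, OQuot ℓ M → N ≤ M) ∧ N ≤ H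

section Reps

variable {k : Type*} [CommSemiring k] {G : Type*} [Group G]

/-- The subspace `V^H` of `H`-fixed vectors of a representation. -/
def fixedPts {V : Type*} [AddCommMonoid V] [Module k V]
    (ρ : Representation k G V) (H : Subgroup G) : Submodule k V where
  carrier := {v | ∀ g ∈ H, ρ g v = v}
  add_mem' := by
    intro a b ha hb g hg
    rw [map_add, ha g hg, hb g hg]
  zero_mem' := by
    intro g hg
    rw [map_zero]
  smul_mem' := by
    intro c v hv g hg
    rw [map_smul, hv g hg]

end Reps

/-- The weak gap condition for a real representation: `dim V^P ≥ 2 dim V^H` for all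
`P < H ≤ G` with `P` of prime power order. -/
def WeakGap {G : Type*} [Group G] {V : Type*} [AddCommGroup V] [Module ℝ V]
    (ρ : Representation ℝ G V) : Prop :=
  ∀ P H : Subgroup G, P < H → (∃ ℓ k : ℕ, Nat.Prime ℓ ∧ Nat.card P = ℓ ^ k) →
    2 * Module.finrank ℝ (fixedPts ρ H) ≤ Module.finrank ℝ (fixedPts ρ P)

/-- Isomorphism of real representations: an equivariant linear equivalence. -/
def RepIso {G : Type*} [Group G] {U V : Type*} [AddCommGroup U] [Module ℝ U]
    [AddCommGroup V] [Module ℝ V]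
    (ρU : Representation ℝ G U) (ρV : Representation ℝ G V) : Prop :=
  ∃ e : U ≃ₗ[ℝ] V, ∀ (g : G) (u : U), e (ρU g u) = ρV g (e u)

/-- Two real representations are `𝒫`-matched if their restrictions to every subgroup of
prime power order are isomorphic. -/
def PMatched {G : Type*} [Group G] {U V : Type*} [AddCommGroup U] [Module ℝ U]
    [AddCommGroup V] [Module ℝ V]
    (ρU : Representation ℝ G U) (ρV : Representation ℝ G V) : Prop :=
  ∀ P : Subgroup G, (∃ ℓ k : ℕ, Nat.Prime ℓ ∧ Nat.card P = ℓ ^ k) →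
    RepIso (ρU.comp P.subtype) (ρV.comp P.subtype)

/-- A bundled finite-dimensional-free real representation of `G`. -/
structure RealRep (G : Type*) [Group G] where
  carrier : Type
  [acg : AddCommGroup carrier]
  [mod : Module ℝ carrier]
  rho : Representation ℝ G carrier

attribute [instance] RealRep.acg RealRep.mod

theorem dihedralAut_pow_r (n : ℕ) (u : (ZMod n)ˣ) (k : ℕ) (m : ZMod n) :
    ((dihedralAut n u) ^ k) (DihedralGroup.r m)
      = DihedralGroup.r (((u ^ k : (ZMod n)ˣ) : ZMod n) * m) := by
  induction k generalizing m with
  | zero => simp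
  | succ k ih =>
    rw [pow_succ, MulAut.mul_apply]
    have h1 : (dihedralAut n u) (DihedralGroup.r m) = DihedralGroup.r ((u : ZMod n) * m) := rfl
    rw [h1, ih, pow_succ, Units.val_mul, mul_assoc]

theorem Hyp.phiG_r (h : Hyp p q i) (z : Multiplicative (ZMod q)) (m : ZMod (p * q)) :
    h.phiG z (DihedralGroup.r m)
      = DihedralGroup.r (((h.unit ^ (toAdd z).val : (ZMod (p * q))ˣ) : ZMod (p * q)) * m) := by
  have h1 : h.phiG z = (dihedralAut (p * q) h.unit) ^ (toAdd z).val := rfl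
  rw [h1, dihedralAut_pow_r]

theorem r_inv (n : ℕ) (m : ZMod n) : (DihedralGroup.r m)⁻¹ = DihedralGroup.r (-m) := rfl

/-- The subgroup `N_{pq²} = {(aˡ, cᵐ)}` of `G_{p,q}`. -/
def NSub (h : Hyp p q i) : Subgroup (Gpq h) where
  carrier := {x | ∃ l : ZMod (p * q), x.left = DihedralGroup.r l}
  one_mem' := ⟨0, rfl⟩
  mul_mem' := by
    rintro x y ⟨lx, hx⟩ ⟨ly, hy⟩
    refine ⟨lx + (h.unit ^ (toAdd x.right).val : (ZMod (p * q))ˣ) * ly, ?_⟩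
    rw [SemidirectProduct.mul_left, hx, hy, h.phiG_r, DihedralGroup.r_mul_r]
  inv_mem' := by
    rintro x ⟨lx, hx⟩
    refine ⟨-((h.unit ^ (toAdd x.right⁻¹).val : (ZMod (p * q))ˣ) * lx), ?_⟩
    rw [SemidirectProduct.inv_left, hx, r_inv, h.phiG_r]
    congr 1
    ring

/-- The subgroup `N_{2pq} = {(bᵉaˡ, 1)} ≅ D_{2pq}` of `G_{p,q}`. -/
def N2pqSub (h : Hyp p q i) : Subgroup (Gpq h) :=
  MonoidHom.ker SemidirectProduct.rightHom

/-- The subgroup `N¹_{pq} = {(aˡ, 1)}` of `G_{p,q}`. -/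
def NpqOneSub (h : Hyp p q i) : Subgroup (Gpq h) where
  carrier := {x | x.right = 1 ∧ ∃ l : ZMod (p * q), x.left = DihedralGroup.r l}
  one_mem' := ⟨rfl, 0, rfl⟩
  mul_mem' := by
    rintro x y ⟨hx1, lx, hx⟩ ⟨hy1, ly, hy⟩
    refine ⟨by rw [SemidirectProduct.mul_right, hx1, hy1, mul_one],
      lx + (h.unit ^ (toAdd x.right).val : (ZMod (p * q))ˣ) * ly, ?_⟩
    rw [SemidirectProduct.mul_left, hx, hy, h.phiG_r, DihedralGroup.r_mul_r]
  inv_mem' := by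
    rintro x ⟨hx1, lx, hx⟩
    refine ⟨by rw [SemidirectProduct.inv_right, hx1, inv_one],
      -((h.unit ^ (toAdd x.right⁻¹).val : (ZMod (p * q))ˣ) * lx), ?_⟩
    rw [SemidirectProduct.inv_left, hx, r_inv, h.phiG_r]
    congr 1
    ring

/-- The subgroup `N²_{pq} = {(a^{qs}, cᵐ)}` of `G_{p,q}`. -/
def NpqTwoSub (h : Hyp p q i) : Subgroup (Gpq h) where
  carrier := {x | ∃ s : ZMod (p * q), x.left = DihedralGroup.r ((q : ZMod (p * q)) * s)}
  one_mem' := ⟨0, by simp⟩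
  mul_mem' := by
    rintro x y ⟨sx, hx⟩ ⟨sy, hy⟩
    refine ⟨sx + (h.unit ^ (toAdd x.right).val : (ZMod (p * q))ˣ) * sy, ?_⟩
    rw [SemidirectProduct.mul_left, hx, hy, h.phiG_r, DihedralGroup.r_mul_r]
    congr 1
    ring
  inv_mem' := by
    rintro x ⟨sx, hx⟩
    refine ⟨-((h.unit ^ (toAdd x.right⁻¹).val : (ZMod (p * q))ˣ) * sx), ?_⟩
    rw [SemidirectProduct.inv_left, hx, r_inv, h.phiG_r]
    congr 1
    ring

/-- The subgroup `N_p = {(a^{qs}, 1)}` of `G_{p,q}`. -/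
def NpSub (h : Hyp p q i) : Subgroup (Gpq h) where
  carrier := {x | x.right = 1 ∧ ∃ s : ZMod (p * q), x.left = DihedralGroup.r ((q : ZMod (p * q)) * s)}
  one_mem' := ⟨rfl, 0, by simp⟩
  mul_mem' := by
    rintro x y ⟨hx1, sx, hx⟩ ⟨hy1, sy, hy⟩
    refine ⟨by rw [SemidirectProduct.mul_right, hx1, hy1, mul_one],
      sx + (h.unit ^ (toAdd x.right).val : (ZMod (p * q))ˣ) * sy, ?_⟩
    rw [SemidirectProduct.mul_left, hx, hy, h.phiG_r, DihedralGroup.r_mul_r]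
    congr 1
    ring
  inv_mem' := by
    rintro x ⟨hx1, sx, hx⟩
    refine ⟨by rw [SemidirectProduct.inv_right, hx1, inv_one],
      -((h.unit ^ (toAdd x.right⁻¹).val : (ZMod (p * q))ˣ) * sx), ?_⟩
    rw [SemidirectProduct.inv_left, hx, r_inv, h.phiG_r]
    congr 1
    ring

/-- The subgroup `N_q = {(a^{ps}, 1)}` of `G_{p,q}`. -/
def NqSub (h : Hyp p q i) : Subgroup (Gpq h) where
  carrier := {x | x.right = 1 ∧ ∃ s : ZMod (p * q), x.left = DihedralGroup.r ((p : ZMod (p * q)) * s)}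
  one_mem' := ⟨rfl, 0, by simp⟩
  mul_mem' := by
    rintro x y ⟨hx1, sx, hx⟩ ⟨hy1, sy, hy⟩
    refine ⟨by rw [SemidirectProduct.mul_right, hx1, hy1, mul_one],
      sx + (h.unit ^ (toAdd x.right).val : (ZMod (p * q))ˣ) * sy, ?_⟩
    rw [SemidirectProduct.mul_left, hx, hy, h.phiG_r, DihedralGroup.r_mul_r]
    congr 1
    ring
  inv_mem' := by
    rintro x ⟨hx1, sx, hx⟩
    refine ⟨by rw [SemidirectProduct.inv_right, hx1, inv_one],
      -((h.unit ^ (toAdd x.right⁻¹).val : (ZMod (p * q))ˣ) * sx), ?_⟩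
    rw [SemidirectProduct.inv_left, hx, r_inv, h.phiG_r]
    congr 1
    ring

end Mizerka

namespace Mizerka

section Aux

variable {p q i : ℕ}

lemma r_zpow_nat (n : ℕ) (w : ZMod n) (k : ℕ) :
    (DihedralGroup.r w) ^ k = DihedralGroup.r ((k : ZMod n) * w) := by
  induction k with
  | zero => simp
  | succ k ih =>
    rw [pow_succ, ih, DihedralGroup.r_mul_r]
    congr 1
    push_cast
    ring

lemma finite_Gpq (h : Hyp p q i) : Finite (Gpq h) := by
  haveI : NeZero q := ⟨h.hq.ne_zero⟩
  haveI : NeZero (p * q) := ⟨Nat.mul_ne_zero h.hp.ne_zero h.hq.ne_zero⟩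
  exact Finite.of_injective (fun x : Gpq h => (x.left, x.right))
    (fun a b hab => SemidirectProduct.ext (congrArg Prod.fst hab) (congrArg Prod.snd hab))

lemma card_N2pqSub (h : Hyp p q i) : Nat.card (N2pqSub h) = 2 * (p * q) := by
  rw [← DihedralGroup.nat_card (n := p * q)]
  apply Nat.card_congr
  have hrange := SemidirectProduct.range_inl_eq_ker_rightHom (φ := h.phiG)
  refine Equiv.symm (Equiv.ofBijective
    (fun d => ⟨SemidirectProduct.inl d, ?_⟩) ⟨fun a b hab => ?_, fun y => ?_⟩)
  · show SemidirectProduct.inl d ∈ MonoidHom.ker _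
    rw [← hrange]
    exact ⟨d, rfl⟩
  · exact SemidirectProduct.inl_injective (congrArg Subtype.val hab)
  · have hy : (y : Gpq h) ∈ (SemidirectProduct.inl :
        DihedralGroup (p * q) →* Gpq h).range := by rw [hrange]; exact y.2
    obtain ⟨d, hd⟩ := hy
    exact ⟨d, Subtype.ext hd⟩

lemma card_NpqOneSub (h : Hyp p q i) : Nat.card (NpqOneSub h) = p * q := by
  haveI : NeZero q := ⟨h.hq.ne_zero⟩
  haveI : NeZero (p * q) := ⟨Nat.mul_ne_zero h.hp.ne_zero h.hq.ne_zero⟩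
  refine Eq.trans (Nat.card_congr ?_) (Nat.card_zmod (p * q))
  refine Equiv.symm (Equiv.ofBijective
    (fun l => ⟨SemidirectProduct.inl (DihedralGroup.r l), rfl, l, rfl⟩)
    ⟨fun a b hab => ?_, fun y => ?_⟩)
  · have h2 := SemidirectProduct.inl_injective (congrArg Subtype.val hab)
    injection h2
  · obtain ⟨hy1, l, hl⟩ := y.2
    refine ⟨l, Subtype.ext (SemidirectProduct.ext hl.symm hy1.symm)⟩

lemma dvd_mul_primes {d : ℕ} (hp : Nat.Prime p) (hq : Nat.Prime q) (hd : d ∣ p * q) :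
    d = 1 ∨ d = p ∨ d = q ∨ d = p * q := by
  by_cases hpd : p ∣ d
  · obtain ⟨e, rfl⟩ := hpd
    have he : e ∣ q := (mul_dvd_mul_iff_left hp.ne_zero).mp hd
    rcases (Nat.Prime.eq_one_or_self_of_dvd hq e he) with h1 | h1
    · right; left; rw [h1, mul_one]
    · right; right; right; rw [h1]
  · have hco : Nat.Coprime d p :=
      Nat.coprime_comm.mp ((Nat.Prime.coprime_iff_not_dvd hp).mpr hpd)
    have hdq : d ∣ q := hco.dvd_of_dvd_mul_left hd
    rcases Nat.Prime.eq_one_or_self_of_dvd hq d hdq with h1 | h1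
    · left; exact h1
    · right; right; left; exact h1

end Aux

end Mizerka

open Mizerka in
/-- If `N` is a normal subgroup of `G_{p,q}`, then the order of `N` belongs
to `{1, p, q, pq, 2pq, pq², 2pq²}`. -/
theorem statement_12 {p q i : ℕ} (h : Hyp p q i) (N : Subgroup (Gpq h)) (hN : N.Normal) :
    Nat.card N ∈ ({1, p, q, p * q, 2 * p * q, p * q ^ 2, 2 * p * q ^ 2} : Set ℕ) := by
  classical
  haveI : NeZero q := ⟨h.hq.ne_zero⟩
  haveI : NeZero p := ⟨h.hp.ne_zero⟩
  haveI : NeZero (p * q) := ⟨Nat.mul_ne_zero h.hp.ne_zero h.hq.ne_zero⟩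
  haveI : Finite (Gpq h) := finite_Gpq h
  set K : Subgroup (Gpq h) := N2pqSub h with hKdef
  set f : N →* Multiplicative (ZMod q) :=
    SemidirectProduct.rightHom.comp N.subtype with hfdef
  have hcardq : Nat.card (Multiplicative (ZMod q)) = q :=
    (Nat.card_congr Multiplicative.toAdd).trans (Nat.card_zmod q)
  have hcard : Nat.card N = Nat.card f.range * Nat.card f.ker := by
    rw [Subgroup.card_eq_card_quotient_mul_card_subgroup f.ker]
    congr 1
    exact Nat.card_congr (QuotientGroup.quotientKerEquivRange f).toEquiv
  have hkerM : Nat.card f.ker = Nat.card (N ⊓ K : Subgroup (Gpq h)) := by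
    apply Nat.card_congr
    refine ⟨fun x => ⟨(x.1 : Gpq h), Subgroup.mem_inf.mpr ⟨x.1.2, ?_⟩⟩,
      fun y => ⟨⟨y.1, (Subgroup.mem_inf.mp y.2).1⟩, ?_⟩, fun x => rfl, fun y => rfl⟩
    · exact MonoidHom.mem_ker.mpr (MonoidHom.mem_ker.mp x.2)
    · exact MonoidHom.mem_ker.mpr (MonoidHom.mem_ker.mp (Subgroup.mem_inf.mp y.2).2)
  have hrq : Nat.card f.range ∣ q := by
    have h2 := Subgroup.card_subgroup_dvd_card f.range
    rwa [hcardq] at h2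
  have hrange : Nat.card f.range = 1 ∨ Nat.card f.range = q :=
    Nat.Prime.eq_one_or_self_of_dvd h.hq _ hrq
  by_cases hrefl : ∃ j : ZMod (p * q),
      (SemidirectProduct.inl (DihedralGroup.sr j) : Gpq h) ∈ N
  · -- N contains a reflection : K ≤ N
    obtain ⟨j, hj⟩ := hrefl
    have hsr : ∀ m : ZMod (p * q),
        (SemidirectProduct.inl (DihedralGroup.sr m) : Gpq h) ∈ N := by
      intro m
      have h2 : IsUnit (2 : ZMod (p * q)) := by
        rw [show (2 : ZMod (p * q)) = ((2 : ℕ) : ZMod (p * q)) by push_cast; ring,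
          ZMod.isUnit_iff_coprime]
        refine Nat.Coprime.mul_right ?_ ?_
        · exact (Nat.prime_two.coprime_iff_not_dvd).mpr
            (by obtain ⟨k, hk⟩ := h.hoddp; omega)
        · exact (Nat.prime_two.coprime_iff_not_dvd).mpr
            (by obtain ⟨k, hk⟩ := h.hoddq; omega)
      obtain ⟨u, hu⟩ := h2
      set k : ZMod (p * q) := ((u⁻¹ : (ZMod (p * q))ˣ) : ZMod (p * q)) * (j - m) with hk
      have hkey : j - 2 * k = m := by
        rw [hk, ← hu, ← mul_assoc, u.mul_inv, one_mul]
        ring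
      have hconj := hN.conj_mem _ hj (SemidirectProduct.inl (DihedralGroup.r k))
      rw [← map_inv, ← map_mul, ← map_mul, Mizerka.r_inv, DihedralGroup.r_mul_sr,
        DihedralGroup.sr_mul_r, show j - k + -k = j - 2 * k by ring, hkey] at hconj
      exact hconj
    have hr : ∀ m : ZMod (p * q),
        (SemidirectProduct.inl (DihedralGroup.r m) : Gpq h) ∈ N := by
      intro m
      have h2 := N.mul_mem (hsr 0) (hsr m)
      rwa [← map_mul, DihedralGroup.sr_mul_sr, sub_zero] at h2
    have hKN : K ≤ N := by
      intro y hy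
      have hy' : y ∈ (SemidirectProduct.inl :
          DihedralGroup (p * q) →* Gpq h).range := by
        rw [SemidirectProduct.range_inl_eq_ker_rightHom]; exact hy
      obtain ⟨d, rfl⟩ := hy'
      cases d with
      | r m => exact hr m
      | sr m => exact hsr m
    have hM : Nat.card (N ⊓ K : Subgroup (Gpq h)) = 2 * (p * q) := by
      rw [inf_eq_right.mpr hKN]
      exact card_N2pqSub h
    rcases hrange with h1 | h1
    · rw [hcard, hkerM, hM, h1, one_mul]
      simp only [Set.mem_insert_iff, Set.mem_singleton_iff]
      right; right; right; right; left; ring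
    · rw [hcard, hkerM, hM, h1]
      simp only [Set.mem_insert_iff, Set.mem_singleton_iff]
      right; right; right; right; right; right; ring
  · -- N contains no reflection : N ⊓ K consists of rotations
    have hMle : (N ⊓ K) ≤ NpqOneSub h := by
      intro x hx
      rw [Subgroup.mem_inf] at hx
      obtain ⟨hxN, hxK⟩ := hx
      have hx1 : x.right = 1 := MonoidHom.mem_ker.mp hxK
      rcases hxl : x.left with l | l
      · exact ⟨hx1, l, hxl⟩
      · exfalso
        apply hrefl
        refine ⟨l, ?_⟩
        have hx2 : x = SemidirectProduct.inl (DihedralGroup.sr l) :=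
          SemidirectProduct.ext hxl hx1
        rwa [← hx2]
    have hMdvd : Nat.card (N ⊓ K : Subgroup (Gpq h)) ∣ p * q := by
      have h2 := Subgroup.card_dvd_of_le hMle
      rwa [card_NpqOneSub h] at h2
    have hMcases := dvd_mul_primes h.hp h.hq hMdvd
    rcases hrange with h1 | h1
    · rw [hcard, hkerM, h1, one_mul]
      rcases hMcases with h2 | h2 | h2 | h2 <;> rw [h2] <;>
        simp [Set.mem_insert_iff]
    · rcases hMcases with h2 | h2 | h2 | h2
      · rw [hcard, hkerM, h1, h2, mul_one]
        simp [Set.mem_insert_iff]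
      · rw [hcard, hkerM, h1, h2, show q * p = p * q by ring]
        simp [Set.mem_insert_iff]
      · -- the impossible case : |N| = q²
        exfalso
        haveI : Fact (1 < q) := ⟨h.hq.one_lt⟩
        haveI : Fact (Nat.Prime p) := ⟨h.hp⟩
        have htop : f.range = ⊤ := Subgroup.eq_top_of_card_eq _ (by rw [h1, hcardq])
        have hmem : ofAdd (1 : ZMod q) ∈ f.range := htop ▸ Subgroup.mem_top _
        obtain ⟨x0, hx0⟩ := hmem
        set x : Gpq h := (x0 : Gpq h) with hxdef
        have hxN : x ∈ N := x0.2
        have hxr : x.right = ofAdd (1 : ZMod q) := hx0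
        set g : Gpq h := SemidirectProduct.inl (DihedralGroup.r 1) with hgdef
        have hyN : x * g * x⁻¹ * g⁻¹ ∈ N := by
          have h3 := N.mul_mem hxN (hN.conj_mem _ (N.inv_mem hxN) g)
          rwa [← mul_assoc, ← mul_assoc] at h3
        have hu : h.phiG x.right (DihedralGroup.r 1)
            = DihedralGroup.r ((i : ZMod (p * q))) := by
          rw [h.phiG_r, mul_one, hxr, toAdd_ofAdd, ZMod.val_one, pow_one]
          congr 1
        have key : x * g * x⁻¹ * g⁻¹ = SemidirectProduct.inl
            (x.left * h.phiG x.right (DihedralGroup.r 1) * x.left⁻¹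
              * DihedralGroup.r (-1)) := by
          ext
          · simp [hgdef, SemidirectProduct.mul_left, SemidirectProduct.mul_right,
              SemidirectProduct.inv_left, SemidirectProduct.inv_right, Mizerka.r_inv,
              map_one, MulAut.one_apply, MulAut.apply_inv_self, map_inv, map_mul,
              mul_assoc]
          · simp [hgdef, SemidirectProduct.mul_right, SemidirectProduct.inv_right]
        -- identify the rotation index
        obtain ⟨w, hw, hwp⟩ : ∃ w : ZMod (p * q),
            x * g * x⁻¹ * g⁻¹ = SemidirectProduct.inl (DihedralGroup.r w) ∧
            ((i : ZMod p) - 1 = ZMod.castHom (dvd_mul_right p q) (ZMod p) w ∨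
             -(i : ZMod p) - 1 = ZMod.castHom (dvd_mul_right p q) (ZMod p) w) := by
          rcases hxl : x.left with l | l
          · refine ⟨(i : ZMod (p * q)) - 1, ?_, Or.inl ?_⟩
            · rw [key, hu, hxl, Mizerka.r_inv, DihedralGroup.r_mul_r,
                DihedralGroup.r_mul_r, DihedralGroup.r_mul_r]
              congr 2
              ring
            · rw [map_sub, map_natCast, map_one]
          · refine ⟨-(i : ZMod (p * q)) - 1, ?_, Or.inr ?_⟩
            · have hsinv : (DihedralGroup.sr l)⁻¹ = DihedralGroup.sr l :=
                inv_eq_of_mul_eq_one_right (DihedralGroup.sr_mul_self l)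
              rw [key, hu, hxl, hsinv, DihedralGroup.sr_mul_r,
                DihedralGroup.sr_mul_sr, DihedralGroup.r_mul_r]
              congr 2
              ring
            · rw [map_sub, map_neg, map_natCast, map_one]
        -- it lies in N ⊓ K and so has order dividing q
        have hwK : SemidirectProduct.inl (DihedralGroup.r w) ∈ N ⊓ K := by
          rw [Subgroup.mem_inf]
          exact ⟨hw ▸ hyN, MonoidHom.mem_ker.mpr (SemidirectProduct.rightHom_inl _)⟩
        have hyq : (SemidirectProduct.inl (DihedralGroup.r w) : Gpq h) ^ q = 1 := by
          have h3 := pow_card_eq_one'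
            (x := (⟨SemidirectProduct.inl (DihedralGroup.r w), hwK⟩ : ↥(N ⊓ K)))
          rw [h2] at h3
          simpa using congrArg Subtype.val h3
        rw [← map_pow, Mizerka.r_zpow_nat] at hyq
        have hq0 : (q : ZMod (p * q)) * w = 0 := by
          have h4 : DihedralGroup.r ((q : ZMod (p * q)) * w)
              = DihedralGroup.r (0 : ZMod (p * q)) := by
            rw [← DihedralGroup.one_def]
            exact SemidirectProduct.inl_injective (by rw [hyq, map_one])
          injection h4
        have hpz := congrArg (ZMod.castHom (dvd_mul_right p q) (ZMod p)) hq0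
        rw [map_mul, map_zero, map_natCast] at hpz
        have hplt : q < p := by
          have h5 : 0 < p - 1 := by have := h.hp.two_le; omega
          have := Nat.le_of_dvd h5 h.hdvd
          omega
        have hqnz : (q : ZMod p) ≠ 0 := by
          rw [Ne, ZMod.natCast_eq_zero_iff]
          intro h6
          have := Nat.le_of_dvd (h.hq.pos) h6
          omega
        have hw0 : ZMod.castHom (dvd_mul_right p q) (ZMod p) w = 0 :=
          (mul_eq_zero.mp hpz).resolve_left hqnz
        rcases hwp with h7 | h7
        · rw [hw0] at h7
          have h8 : (i : ZMod p) = 1 := by linear_combination h7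
          have h9 : orderOf (i : ZMod p) = 1 := by rw [h8, orderOf_one]
          rw [h.hord] at h9
          exact h.hq.one_lt.ne' h9
        · rw [hw0] at h7
          have h8 : (i : ZMod p) = -1 := by linear_combination -h7
          have h9 : (i : ZMod p) ^ 2 = 1 := by rw [h8]; ring
          have h10 : orderOf (i : ZMod p) ∣ 2 := orderOf_dvd_of_pow_eq_one h9
          rw [h.hord] at h10
          have := Nat.le_of_dvd (by norm_num) h10
          obtain ⟨k, hk⟩ := h.hoddq
          have := h.hq.two_le
          omega
      · rw [hcard, hkerM, h1, h2, show q * (p * q) = p * q ^ 2 by ring]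
        simp [Set.mem_insert_iff]
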